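/- Let (Ω, ℱ, ℙ) be a probability space with filtration (ℱ_t)_{t∈ℕ}. Let (p_t)_{t∈ℕ} be a Δ(K_A×K_B)-valued martingale with respect to (ℱ_t) with p_1 = p⁰ a.s. for a fixed p⁰ ∈ Δ(K_A×K_B), and let (β_{A,t})_{t∈ℕ} and (β_{B,t})_{t∈ℕ} be real-valued martingales with respect to (ℱ_t) such that for every t ∈ ℕ: β_{A,t} ≤ Cav(v_A)((p_t)_A) a.s. and β_{B,t} ≤ Cav(v_B)((p_t)_B) a.s., and such that β_{A,1} + β_{B,1} = Cav(v_A)(p⁰_A) + Cav(v_B)(p⁰_B) a.s. Suppose moreover that p_t → p^∞ a.s. for a random variable p^∞ with values in Δ(K_A×K_B), and that p^∞ is a.s. a product distribution, i.e., p^∞ = (p^∞)_A ⊗ (p^∞)_B a.s. Then Cav(h)(p⁰) = Cav(v_A)(p⁰_A) + Cav(v_B)(p⁰_B). (This is the content of Corollary 4.2: if an equilibrium paying the upper end of I(p⁰) has a product asymptotic posterior, then I(p⁰) is degenerate.) -/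

import Mathlib

open scoped BigOperators
open Finset MeasureTheory

noncomputable section

/-- The concavification `Cav(v)(p)`: pointwise smallest concave majorant of `v` on the simplex. -/
def cav {K : Type*} [Fintype K] (v : (K → ℝ) → ℝ) (p : K → ℝ) : ℝ :=
  sInf { y : ℝ | ∃ g : (K → ℝ) → ℝ,
    ConcaveOn ℝ (stdSimplex ℝ K) g ∧ (∀ q ∈ stdSimplex ℝ K, v q ≤ g q) ∧ y = g p }

/-- Marginal on `K_A` of a vector indexed by `K_A × K_B`. -/
def margA {KA KB : Type*} [Fintype KB] (q : KA × KB → ℝ) : KA → ℝ :=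
  fun a => ∑ b, q (a, b)

/-- Marginal on `K_B` of a vector indexed by `K_A × K_B`. -/
def margB {KA KB : Type*} [Fintype KA] (q : KA × KB → ℝ) : KB → ℝ :=
  fun b => ∑ a, q (a, b)

end

set_option linter.unusedSectionVars false
namespace Stmt7Aux

variable {K : Type*} [Fintype K] {v : (K → ℝ) → ℝ} {M : ℝ}

def cavSet (v : (K → ℝ) → ℝ) (p : K → ℝ) : Set ℝ :=
  { y : ℝ | ∃ g : (K → ℝ) → ℝ,
    ConcaveOn ℝ (stdSimplex ℝ K) g ∧ (∀ q ∈ stdSimplex ℝ K, v q ≤ g q) ∧ y = g p }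

lemma cav_eq (p : K → ℝ) : cav v p = sInf (cavSet v p) := rfl

lemma cavSet_nonempty (hM : ∀ q ∈ stdSimplex ℝ K, v q ≤ M) (p : K → ℝ) :
    (cavSet v p).Nonempty :=
  ⟨M, fun _ => M, concaveOn_const M (convex_stdSimplex ℝ K), hM, rfl⟩

lemma cavSet_lb (hp : p ∈ stdSimplex ℝ K) : ∀ y ∈ cavSet v p, v p ≤ y := by
  rintro y ⟨g, _, hmaj, rfl⟩; exact hmaj p hp

lemma cavSet_bddBelow {p : K → ℝ} (hp : p ∈ stdSimplex ℝ K) : BddBelow (cavSet v p) :=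
  ⟨v p, fun y hy => cavSet_lb hp y hy⟩

lemma cav_le {g : (K → ℝ) → ℝ} (hg : ConcaveOn ℝ (stdSimplex ℝ K) g)
    (hmaj : ∀ q ∈ stdSimplex ℝ K, v q ≤ g q) {p : K → ℝ} (hp : p ∈ stdSimplex ℝ K) :
    cav v p ≤ g p :=
  csInf_le (cavSet_bddBelow hp) ⟨g, hg, hmaj, rfl⟩

lemma le_cav (hM : ∀ q ∈ stdSimplex ℝ K, v q ≤ M) {p : K → ℝ} (hp : p ∈ stdSimplex ℝ K) :
    v p ≤ cav v p :=
  le_csInf (cavSet_nonempty hM p) (cavSet_lb hp)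

lemma cav_concave (hM : ∀ q ∈ stdSimplex ℝ K, v q ≤ M) :
    ConcaveOn ℝ (stdSimplex ℝ K) (cav v) := by
  refine ⟨convex_stdSimplex ℝ K, fun x hx y hy a b ha hb hab => ?_⟩
  refine le_csInf (cavSet_nonempty hM _) ?_
  rintro z ⟨g, hg, hmaj, rfl⟩
  calc a • cav v x + b • cav v y ≤ a • g x + b • g y := by
        gcongr
        · exact cav_le hg hmaj hx
        · exact cav_le hg hmaj hy
      _ ≤ g (a • x + b • y) := hg.2 hx hy ha hb hab

lemma cav_le_const (hM : ∀ q ∈ stdSimplex ℝ K, v q ≤ M) {p : K → ℝ}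
    (hp : p ∈ stdSimplex ℝ K) : cav v p ≤ M :=
  cav_le (concaveOn_const M (convex_stdSimplex ℝ K)) hM hp

section Prod


variable {KA KB : Type*} [Fintype KA] [Fintype KB]

def prodDist (qA : KA → ℝ) (qB : KB → ℝ) : KA × KB → ℝ := fun kk => qA kk.1 * qB kk.2

lemma margA_mem {q : KA × KB → ℝ} (hq : q ∈ stdSimplex ℝ (KA × KB)) :
    margA q ∈ stdSimplex ℝ KA := by
  constructor
  · intro a; exact Finset.sum_nonneg fun b _ => hq.1 (a, b)
  · rw [← hq.2, Fintype.sum_prod_type]; rfl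

lemma margB_mem {q : KA × KB → ℝ} (hq : q ∈ stdSimplex ℝ (KA × KB)) :
    margB q ∈ stdSimplex ℝ KB := by
  constructor
  · intro b; exact Finset.sum_nonneg fun a _ => hq.1 (a, b)
  · rw [← hq.2, Fintype.sum_prod_type_right]; rfl

lemma prodDist_mem {qA : KA → ℝ} {qB : KB → ℝ} (hA : qA ∈ stdSimplex ℝ KA)
    (hB : qB ∈ stdSimplex ℝ KB) : prodDist qA qB ∈ stdSimplex ℝ (KA × KB) := by
  constructor
  · intro kk; exact mul_nonneg (hA.1 _) (hB.1 _)
  · rw [Fintype.sum_prod_type]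
    simp only [prodDist]
    rw [← hA.2]
    exact Finset.sum_congr rfl fun a _ => by rw [← Finset.mul_sum, hB.2, mul_one]

lemma margA_prodDist {qA : KA → ℝ} {qB : KB → ℝ} (hB : qB ∈ stdSimplex ℝ KB) :
    margA (prodDist qA qB) = qA := by
  funext a; simp only [margA, prodDist, ← Finset.mul_sum, hB.2, mul_one]

lemma margB_prodDist {qA : KA → ℝ} {qB : KB → ℝ} (hA : qA ∈ stdSimplex ℝ KA) :
    margB (prodDist qA qB) = qB := by
  funext b; simp only [margB, prodDist]
  rw [← Finset.sum_mul, hA.2, one_mul]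

variable {vA : (KA → ℝ) → ℝ} {vB : (KB → ℝ) → ℝ} {MA MB : ℝ}

/-- Key product inequality: any concave majorant of `h` dominates
`cav vA ⊕ cav vB` at product distributions. -/
lemma prod_ineq {g : (KA × KB → ℝ) → ℝ}
    (hg : ConcaveOn ℝ (stdSimplex ℝ (KA × KB)) g)
    (hmaj : ∀ q ∈ stdSimplex ℝ (KA × KB), vA (margA q) + vB (margB q) ≤ g q)
    {qA : KA → ℝ} {qB : KB → ℝ} (hA : qA ∈ stdSimplex ℝ KA) (hB : qB ∈ stdSimplex ℝ KB) :
    cav vA qA + cav vB qB ≤ g (prodDist qA qB) := by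
  have step1 : ∀ sB ∈ stdSimplex ℝ KB, ∀ rA ∈ stdSimplex ℝ KA,
      cav vA rA + vB sB ≤ g (prodDist rA sB) := by
    intro sB hsB rA hrA
    have hcon : ConcaveOn ℝ (stdSimplex ℝ KA) (fun r => g (prodDist r sB) - vB sB) := by
      refine ⟨convex_stdSimplex ℝ KA, fun x hx y hy a b ha hb hab => ?_⟩
      dsimp only
      have hkey : prodDist (a • x + b • y) sB = a • prodDist x sB + b • prodDist y sB := by
        funext kk; simp [prodDist]; ring
      have h2 := hg.2 (prodDist_mem hx hsB) (prodDist_mem hy hsB) ha hb hab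
      rw [hkey]
      have hc : a * vB sB + b * vB sB = vB sB := by rw [← add_mul, hab, one_mul]
      simp only [smul_eq_mul] at h2 ⊢
      nlinarith [h2, hc]
    have hmaj' : ∀ r ∈ stdSimplex ℝ KA, vA r ≤ g (prodDist r sB) - vB sB := by
      intro r hr
      have := hmaj (prodDist r sB) (prodDist_mem hr hsB)
      rw [margA_prodDist hsB, margB_prodDist hr] at this
      linarith
    have := cav_le hcon hmaj' hrA
    linarith
  have hcon2 : ConcaveOn ℝ (stdSimplex ℝ KB) (fun s => g (prodDist qA s) - cav vA qA) := by
    refine ⟨convex_stdSimplex ℝ KB, fun x hx y hy a b ha hb hab => ?_⟩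
    dsimp only
    have hkey : prodDist qA (a • x + b • y) = a • prodDist qA x + b • prodDist qA y := by
      funext kk; simp [prodDist]; ring
    have h2 := hg.2 (prodDist_mem hA hx) (prodDist_mem hA hy) ha hb hab
    rw [hkey]
    have hc : a * cav vA qA + b * cav vA qA = cav vA qA := by rw [← add_mul, hab, one_mul]
    simp only [smul_eq_mul] at h2 ⊢
    nlinarith [h2, hc]
  have hmaj2 : ∀ s ∈ stdSimplex ℝ KB, vB s ≤ g (prodDist qA s) - cav vA qA := by
    intro s hs
    have := step1 s hs qA hA
    linarith
  have := cav_le hcon2 hmaj2 hB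
  linarith

end Prod
section Split

variable {K : Type*} [Fintype K]

/-- ℓ¹ distance on `K → ℝ`. -/
def d1 (x y : K → ℝ) : ℝ := ∑ k, |x k - y k|

lemma d1_nonneg (x y : K → ℝ) : 0 ≤ d1 x y :=
  Finset.sum_nonneg fun _ _ => abs_nonneg _

lemma d1_comm (x y : K → ℝ) : d1 x y = d1 y x := by
  unfold d1; exact Finset.sum_congr rfl fun k _ => abs_sub_comm _ _

lemma abs_sub_le_add {a b : ℝ} (ha : 0 ≤ a) (hb : 0 ≤ b) : |a - b| ≤ a + b := by
  rw [abs_sub_le_iff]; constructor <;> linarith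

/-- Transport lemma: a splitting of `p` can be transported to a splitting of `q`
with total ℓ¹ displacement at most `d1 p q`. -/
lemma exists_transport {p q : K → ℝ} (hp : p ∈ stdSimplex ℝ K) (hq : q ∈ stdSimplex ℝ K)
    {n : ℕ} {w : Fin n → ℝ} {r : Fin n → K → ℝ}
    (hw0 : ∀ i, 0 ≤ w i) (hw1 : ∑ i, w i = 1) (hr : ∀ i, r i ∈ stdSimplex ℝ K)
    (hmix : ∀ k, ∑ i, w i * r i k = p k) :
    ∃ r' : Fin n → K → ℝ, (∀ i, r' i ∈ stdSimplex ℝ K) ∧ (∀ k, ∑ i, w i * r' i k = q k) ∧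
      ∑ i, w i * d1 (r i) (r' i) ≤ d1 p q := by
  classical
  set dm : K → ℝ := fun k => max (p k - q k) 0 with hdm_def
  set dp : K → ℝ := fun k => max (q k - p k) 0 with hdp_def
  have hdm0 : ∀ k, 0 ≤ dm k := fun k => le_max_right _ _
  have hdp0 : ∀ k, 0 ≤ dp k := fun k => le_max_right _ _
  have hdm_le : ∀ k, dm k ≤ p k := fun k => max_le (by linarith [hq.1 k]) (hp.1 k)
  have hdpdm : ∀ k, dp k - dm k = q k - p k := by
    intro k
    rcases le_total (p k) (q k) with h | h
    · have h1 : dp k = q k - p k := max_eq_left (by linarith)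
      have h2 : dm k = 0 := max_eq_right (by linarith)
      rw [h1, h2]; ring
    · have h1 : dp k = 0 := max_eq_right (by linarith)
      have h2 : dm k = p k - q k := max_eq_left (by linarith)
      rw [h1, h2]; ring
  have habs : ∀ k, |p k - q k| = dm k + dp k := by
    intro k
    rcases le_total (p k) (q k) with h | h
    · have h1 : dp k = q k - p k := max_eq_left (by linarith)
      have h2 : dm k = 0 := max_eq_right (by linarith)
      rw [h1, h2, abs_of_nonpos (by linarith)]; ring
    · have h1 : dp k = 0 := max_eq_right (by linarith)
      have h2 : dm k = p k - q k := max_eq_left (by linarith)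
      rw [h1, h2, abs_of_nonneg (by linarith)]; ring
  set m : ℝ := ∑ k, dm k with hm_def
  have hm0 : 0 ≤ m := Finset.sum_nonneg fun k _ => hdm0 k
  have hdp_sum : ∑ k, dp k = m := by
    have h0 : ∑ k, (dp k - dm k) = 0 := by
      have : ∑ k, (dp k - dm k) = ∑ k, (q k - p k) :=
        Finset.sum_congr rfl fun k _ => hdpdm k
      rw [this, Finset.sum_sub_distrib, hq.2, hp.2]; ring
    rw [Finset.sum_sub_distrib] at h0
    linarith
  have hd1pq : d1 p q = 2 * m := by
    unfold d1
    rw [Finset.sum_congr rfl fun k _ => habs k, Finset.sum_add_distrib, hdp_sum]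
    ring
  by_cases hm : m = 0
  · -- p = q, take r' = r
    have hdm_zero : ∀ k, dm k = 0 := fun k =>
      (Finset.sum_eq_zero_iff_of_nonneg (fun k _ => hdm0 k)).mp hm k (Finset.mem_univ k)
    have hdp_zero : ∀ k, dp k = 0 := fun k =>
      (Finset.sum_eq_zero_iff_of_nonneg (fun k _ => hdp0 k)).mp (hdp_sum.trans hm) k
        (Finset.mem_univ k)
    refine ⟨r, hr, fun k => ?_, ?_⟩
    · rw [hmix k]
      have := hdpdm k
      rw [hdm_zero k, hdp_zero k] at this
      linarith
    · have : ∀ i : Fin n, d1 (r i) (r i) = 0 := by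
        intro i; unfold d1; simp
      calc ∑ i, w i * d1 (r i) (r i) = 0 := by
            rw [Finset.sum_congr rfl fun i _ => by rw [this i, mul_zero]]
            exact Finset.sum_const_zero
        _ ≤ d1 p q := d1_nonneg p q
  · have hmpos : 0 < m := lt_of_le_of_ne hm0 (Ne.symm hm)
    set c : K → ℝ := fun k => dm k / p k with hc_def
    have hc0 : ∀ k, 0 ≤ c k := fun k => div_nonneg (hdm0 k) (hp.1 k)
    have hc1 : ∀ k, c k ≤ 1 := by
      intro k
      by_cases hpk : p k = 0
      · simp [hc_def, hpk]
      · exact div_le_one_of_le₀ (hdm_le k) (hp.1 k)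
    have hpc : ∀ k, p k * c k = dm k := by
      intro k
      by_cases hpk : p k = 0
      · have : dm k = 0 := le_antisymm (hpk ▸ hdm_le k) (hdm0 k)
        simp [hpk, this]
      · rw [hc_def]; field_simp
    set R : Fin n → ℝ := fun i => ∑ k, r i k * c k with hR_def
    have hR0 : ∀ i, 0 ≤ R i := fun i =>
      Finset.sum_nonneg fun k _ => mul_nonneg ((hr i).1 k) (hc0 k)
    have hRsum : ∑ i, w i * R i = m := by
      rw [hR_def]
      simp only [Finset.mul_sum]
      rw [Finset.sum_comm]
      calc ∑ k, ∑ i, w i * (r i k * c k)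
          = ∑ k, (∑ i, w i * r i k) * c k := by
            refine Finset.sum_congr rfl fun k _ => ?_
            rw [Finset.sum_mul]
            exact Finset.sum_congr rfl fun i _ => by ring
        _ = ∑ k, p k * c k := Finset.sum_congr rfl fun k _ => by rw [hmix k]
        _ = m := by rw [Finset.sum_congr rfl fun k _ => hpc k]
    refine ⟨fun i k => r i k * (1 - c k) + R i * (dp k / m), fun i => ⟨?_, ?_⟩, ?_, ?_⟩
    · intro k
      have h1 : 0 ≤ r i k * (1 - c k) := mul_nonneg ((hr i).1 k) (by linarith [hc1 k])
      have h2 : 0 ≤ R i * (dp k / m) := mul_nonneg (hR0 i) (div_nonneg (hdp0 k) hm0)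
      linarith
    · -- sums to 1
      rw [Finset.sum_add_distrib]
      have e1 : ∑ k, r i k * (1 - c k) = 1 - R i := by
        have : ∀ k, r i k * (1 - c k) = r i k - r i k * c k := fun k => by ring
        rw [Finset.sum_congr rfl fun k _ => this k, Finset.sum_sub_distrib, (hr i).2, hR_def]
      have e2 : ∑ k, R i * (dp k / m) = R i := by
        rw [← Finset.mul_sum]
        have : ∑ k, dp k / m = 1 := by
          rw [← Finset.sum_div, hdp_sum, div_self hm]
        rw [this, mul_one]
      rw [e1, e2]; ring
    · -- mixes to q
      intro k
      have expand : ∀ i, w i * (r i k * (1 - c k) + R i * (dp k / m))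
          = (w i * r i k) * (1 - c k) + (w i * R i) * (dp k / m) := fun i => by ring
      rw [Finset.sum_congr rfl fun i _ => expand i, Finset.sum_add_distrib,
        ← Finset.sum_mul, ← Finset.sum_mul, hmix k, hRsum]
      have e3 : m * (dp k / m) = dp k := by field_simp
      have e4 : p k * (1 - c k) = p k - dm k := by rw [mul_one_sub, hpc k]
      rw [e3]
      have := hdpdm k
      linarith [e4]
    · -- displacement bound
      have hbound : ∀ i, w i * d1 (r i) (fun k => r i k * (1 - c k) + R i * (dp k / m))
          ≤ w i * (2 * R i) := by
        intro i
        refine mul_le_mul_of_nonneg_left ?_ (hw0 i)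
        unfold d1
        have hterm : ∀ k, |r i k - (r i k * (1 - c k) + R i * (dp k / m))|
            ≤ r i k * c k + R i * (dp k / m) := by
          intro k
          have : r i k - (r i k * (1 - c k) + R i * (dp k / m))
              = r i k * c k - R i * (dp k / m) := by ring
          rw [this]
          exact abs_sub_le_add (mul_nonneg ((hr i).1 k) (hc0 k))
            (mul_nonneg (hR0 i) (div_nonneg (hdp0 k) hm0))
        calc ∑ k, |r i k - (r i k * (1 - c k) + R i * (dp k / m))|
            ≤ ∑ k, (r i k * c k + R i * (dp k / m)) :=
              Finset.sum_le_sum fun k _ => hterm k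
          _ = R i + R i := by
              rw [Finset.sum_add_distrib, ← Finset.mul_sum]
              have : ∑ k, dp k / m = 1 := by rw [← Finset.sum_div, hdp_sum, div_self hm]
              rw [this, mul_one, hR_def]
          _ = 2 * R i := by ring
      calc ∑ i, w i * d1 (r i) (fun k => r i k * (1 - c k) + R i * (dp k / m))
          ≤ ∑ i, w i * (2 * R i) := Finset.sum_le_sum fun i _ => hbound i
        _ = 2 * m := by
            rw [← hRsum, Finset.mul_sum]
            exact Finset.sum_congr rfl fun i _ => by ring
        _ = d1 p q := hd1pq.symm

end Split

section Scav

variable {K : Type*} [Fintype K] {v : (K → ℝ) → ℝ} {M C : ℝ}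

/-- Values of finite splittings of `p` into simplex points. -/
def splitSet (v : (K → ℝ) → ℝ) (p : K → ℝ) : Set ℝ :=
  { y : ℝ | ∃ n : ℕ, ∃ w : Fin n → ℝ, ∃ r : Fin n → K → ℝ,
      (∀ i, 0 ≤ w i) ∧ (∑ i, w i) = 1 ∧ (∀ i, r i ∈ stdSimplex ℝ K) ∧
      (∀ k, ∑ i, w i * r i k = p k) ∧ y = ∑ i, w i * v (r i) }

lemma self_mem_splitSet {p : K → ℝ} (hp : p ∈ stdSimplex ℝ K) : v p ∈ splitSet v p := by
  refine ⟨1, fun _ => 1, fun _ => p, fun _ => zero_le_one, by simp, fun _ => hp,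
    fun k => by simp, by simp⟩

lemma splitSet_ub (hM : ∀ q ∈ stdSimplex ℝ K, v q ≤ M) {p : K → ℝ} :
    ∀ y ∈ splitSet v p, y ≤ M := by
  rintro y ⟨n, w, r, hw0, hw1, hr, hmix, rfl⟩
  calc ∑ i, w i * v (r i) ≤ ∑ i, w i * M :=
        Finset.sum_le_sum fun i _ => mul_le_mul_of_nonneg_left (hM _ (hr i)) (hw0 i)
    _ = M := by rw [← Finset.sum_mul, hw1, one_mul]

lemma splitSet_bddAbove (hM : ∀ q ∈ stdSimplex ℝ K, v q ≤ M) {p : K → ℝ} :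
    BddAbove (splitSet v p) := ⟨M, fun y hy => splitSet_ub hM y hy⟩

lemma splitSet_le_majorant {g : (K → ℝ) → ℝ} (hg : ConcaveOn ℝ (stdSimplex ℝ K) g)
    (hmaj : ∀ q ∈ stdSimplex ℝ K, v q ≤ g q) {p : K → ℝ} :
    ∀ y ∈ splitSet v p, y ≤ g p := by
  rintro y ⟨n, w, r, hw0, hw1, hr, hmix, rfl⟩
  have hpsum : (∑ i, w i • r i) = p := by
    funext k
    rw [Finset.sum_apply]
    simpa [smul_eq_mul] using hmix k
  calc ∑ i, w i * v (r i) ≤ ∑ i, w i * g (r i) :=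
        Finset.sum_le_sum fun i _ => mul_le_mul_of_nonneg_left (hmaj _ (hr i)) (hw0 i)
    _ = ∑ i, w i • g (r i) := by simp [smul_eq_mul]
    _ ≤ g (∑ i, w i • r i) :=
        hg.le_map_sum (fun i _ => hw0 i) (by simpa using hw1) (fun i _ => hr i)
    _ = g p := by rw [hpsum]

/-- Supremum over splittings. -/
noncomputable def Scav (v : (K → ℝ) → ℝ) (p : K → ℝ) : ℝ := sSup (splitSet v p)

lemma scav_le_cav (hM : ∀ q ∈ stdSimplex ℝ K, v q ≤ M) {p : K → ℝ}
    (hp : p ∈ stdSimplex ℝ K) : Scav v p ≤ cav v p := by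
  refine le_csInf (cavSet_nonempty hM p) ?_
  rintro z ⟨g, hg, hmaj, rfl⟩
  exact csSup_le ⟨v p, self_mem_splitSet hp⟩ (splitSet_le_majorant hg hmaj)

lemma le_scav (hM : ∀ q ∈ stdSimplex ℝ K, v q ≤ M) {p : K → ℝ}
    (hp : p ∈ stdSimplex ℝ K) : v p ≤ Scav v p :=
  le_csSup (splitSet_bddAbove hM) (self_mem_splitSet hp)

lemma splitSet_combo {x y : K → ℝ} {a b : ℝ} (ha : 0 ≤ a) (hb : 0 ≤ b) (hab : a + b = 1)
    {y1 y2 : ℝ} (h1 : y1 ∈ splitSet v x) (h2 : y2 ∈ splitSet v y) :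
    a * y1 + b * y2 ∈ splitSet v (a • x + b • y) := by
  obtain ⟨n1, w1, r1, hw01, hw11, hr1, hmix1, rfl⟩ := h1
  obtain ⟨n2, w2, r2, hw02, hw12, hr2, hmix2, rfl⟩ := h2
  refine ⟨n1 + n2, Fin.addCases (fun i => a * w1 i) (fun j => b * w2 j),
    Fin.addCases r1 r2, ?_, ?_, ?_, ?_, ?_⟩
  · intro i
    refine Fin.addCases (fun i => ?_) (fun j => ?_) i <;> simp
    · exact mul_nonneg ha (hw01 i)
    · exact mul_nonneg hb (hw02 j)
  · rw [Fin.sum_univ_add]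
    simp only [Fin.addCases_left, Fin.addCases_right]
    rw [← Finset.mul_sum, ← Finset.mul_sum, hw11, hw12]
    simpa using hab
  · intro i
    refine Fin.addCases (fun i => ?_) (fun j => ?_) i <;> simp [hr1, hr2]
  · intro k
    rw [Fin.sum_univ_add]
    simp only [Fin.addCases_left, Fin.addCases_right]
    have e1 : ∑ i, a * w1 i * r1 i k = a * x k := by
      rw [← hmix1 k, Finset.mul_sum]
      exact Finset.sum_congr rfl fun i _ => by ring
    have e2 : ∑ j, b * w2 j * r2 j k = b * y k := by
      rw [← hmix2 k, Finset.mul_sum]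
      exact Finset.sum_congr rfl fun j _ => by ring
    rw [e1, e2]
    simp [smul_eq_mul]
  · rw [Fin.sum_univ_add]
    simp only [Fin.addCases_left, Fin.addCases_right]
    rw [Finset.mul_sum, Finset.mul_sum]
    congr 1 <;> exact Finset.sum_congr rfl fun i _ => by ring

lemma scav_concave (hM : ∀ q ∈ stdSimplex ℝ K, v q ≤ M) :
    ConcaveOn ℝ (stdSimplex ℝ K) (Scav v) := by
  refine ⟨convex_stdSimplex ℝ K, fun x hx y hy a b ha hb hab => ?_⟩
  refine le_of_forall_pos_le_add fun ε hε => ?_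
  obtain ⟨y1, hy1, hy1'⟩ := exists_lt_of_lt_csSup (s := splitSet v x)
    ⟨v x, self_mem_splitSet hx⟩ (show Scav v x - ε / 2 < sSup (splitSet v x) by
      change Scav v x - ε / 2 < Scav v x; linarith)
  obtain ⟨y2, hy2, hy2'⟩ := exists_lt_of_lt_csSup (s := splitSet v y)
    ⟨v y, self_mem_splitSet hy⟩ (show Scav v y - ε / 2 < sSup (splitSet v y) by
      change Scav v y - ε / 2 < Scav v y; linarith)
  have hmem := splitSet_combo ha hb hab hy1 hy2
  have hle : a * y1 + b * y2 ≤ Scav v (a • x + b • y) :=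
    le_csSup (splitSet_bddAbove hM) hmem
  have e1 : a * Scav v x - a * (ε / 2) ≤ a * y1 := by
    have := mul_le_mul_of_nonneg_left hy1'.le ha
    rw [mul_sub] at this; linarith
  have e2 : b * Scav v y - b * (ε / 2) ≤ b * y2 := by
    have := mul_le_mul_of_nonneg_left hy2'.le hb
    rw [mul_sub] at this; linarith
  have e3 : a * (ε / 2) + b * (ε / 2) = ε / 2 := by rw [← add_mul, hab]; ring
  simp only [smul_eq_mul]
  linarith

lemma scav_lip_aux (hC : 0 ≤ C)
    (hv1 : ∀ x ∈ stdSimplex ℝ K, ∀ y ∈ stdSimplex ℝ K, |v x - v y| ≤ C * d1 x y)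
    (hM : ∀ q ∈ stdSimplex ℝ K, v q ≤ M)
    {x y : K → ℝ} (hx : x ∈ stdSimplex ℝ K) (hy : y ∈ stdSimplex ℝ K) :
    Scav v x ≤ Scav v y + C * d1 x y := by
  refine csSup_le ⟨v x, self_mem_splitSet hx⟩ ?_
  rintro val ⟨n, w, r, hw0, hw1, hr, hmix, rfl⟩
  obtain ⟨r', hr', hmix', hd⟩ := exists_transport hx hy hw0 hw1 hr hmix
  have h1 : ∑ i, w i * v (r' i) ≤ Scav v y :=
    le_csSup (splitSet_bddAbove hM) ⟨n, w, r', hw0, hw1, hr', hmix', rfl⟩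
  have h2 : ∑ i, w i * v (r i) - ∑ i, w i * v (r' i) ≤ C * d1 x y := by
    rw [← Finset.sum_sub_distrib]
    calc ∑ i, (w i * v (r i) - w i * v (r' i))
        = ∑ i, w i * (v (r i) - v (r' i)) :=
          Finset.sum_congr rfl fun i _ => by ring
      _ ≤ ∑ i, w i * (C * d1 (r i) (r' i)) := by
          refine Finset.sum_le_sum fun i _ => mul_le_mul_of_nonneg_left ?_ (hw0 i)
          exact (le_abs_self _).trans (hv1 _ (hr i) _ (hr' i))
      _ = C * ∑ i, w i * d1 (r i) (r' i) := by
          rw [Finset.mul_sum]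
          exact Finset.sum_congr rfl fun i _ => by ring
      _ ≤ C * d1 x y := mul_le_mul_of_nonneg_left hd hC
  linarith

lemma cav_eq_scav (hM : ∀ q ∈ stdSimplex ℝ K, v q ≤ M) {p : K → ℝ}
    (hp : p ∈ stdSimplex ℝ K) : cav v p = Scav v p :=
  le_antisymm (cav_le (scav_concave hM) (fun _ hq => le_scav hM hq) hp)
    (scav_le_cav hM hp)

lemma cav_lip (hC : 0 ≤ C)
    (hv1 : ∀ x ∈ stdSimplex ℝ K, ∀ y ∈ stdSimplex ℝ K, |v x - v y| ≤ C * d1 x y)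
    (hM : ∀ q ∈ stdSimplex ℝ K, v q ≤ M)
    {x y : K → ℝ} (hx : x ∈ stdSimplex ℝ K) (hy : y ∈ stdSimplex ℝ K) :
    |cav v x - cav v y| ≤ C * d1 x y := by
  rw [cav_eq_scav hM hx, cav_eq_scav hM hy, abs_sub_le_iff]
  constructor
  · linarith [scav_lip_aux hC hv1 hM hx hy]
  · have := scav_lip_aux hC hv1 hM hy hx
    rw [d1_comm y x] at this
    linarith

lemma d1_le_card_mul_dist (x y : K → ℝ) : d1 x y ≤ (Fintype.card K : ℝ) * dist x y := by
  unfold d1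
  have h : ∀ k ∈ Finset.univ, |x k - y k| ≤ dist x y := by
    intro k _
    rw [← Real.dist_eq]
    exact dist_le_pi_dist x y k
  calc ∑ k, |x k - y k| ≤ Finset.univ.card • dist x y := Finset.sum_le_card_nsmul _ _ _ h
    _ = (Fintype.card K : ℝ) * dist x y := by
        rw [nsmul_eq_mul, Finset.card_univ]

/-- Continuous (global) extension of the concavification of a Lipschitz function. -/
lemma exists_cav_ext (hC : 0 ≤ C)
    (hv1 : ∀ x ∈ stdSimplex ℝ K, ∀ y ∈ stdSimplex ℝ K, |v x - v y| ≤ C * d1 x y)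
    (hM : ∀ q ∈ stdSimplex ℝ K, v q ≤ M) :
    ∃ F : (K → ℝ) → ℝ, Continuous F ∧ ∀ q ∈ stdSimplex ℝ K, F q = cav v q := by
  set C' : NNReal := ⟨C * (Fintype.card K), by positivity⟩ with hC'
  have hlip : LipschitzOnWith C' (cav v) (stdSimplex ℝ K) := by
    rw [lipschitzOnWith_iff_dist_le_mul]
    intro x hx y hy
    rw [Real.dist_eq]
    calc |cav v x - cav v y| ≤ C * d1 x y := cav_lip hC hv1 hM hx hy
      _ ≤ C * ((Fintype.card K : ℝ) * dist x y) := by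
          exact mul_le_mul_of_nonneg_left (d1_le_card_mul_dist x y) hC
      _ = (C' : ℝ) * dist x y := by
          show C * ((Fintype.card K : ℝ) * dist x y) = (C * (Fintype.card K : ℝ)) * dist x y; ring
  obtain ⟨F, hF, hFeq⟩ := hlip.extend_real
  exact ⟨F, hF.continuous, fun q hq => (hFeq hq).symm⟩

lemma concaveOn_congr {s : Set (K → ℝ)} {f g : (K → ℝ) → ℝ} (hf : ConcaveOn ℝ s f)
    (h : ∀ x ∈ s, f x = g x) : ConcaveOn ℝ s g := by
  refine ⟨hf.1, fun x hx y hy a b ha hb hab => ?_⟩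
  rw [← h x hx, ← h y hy, ← h _ (hf.1 hx hy ha hb hab)]
  exact hf.2 hx hy ha hb hab

end Scav

section Lip

variable {K : Type*} [Fintype K]

lemma lip_to_d1 {C : NNReal} {v : (K → ℝ) → ℝ} (h : LipschitzOnWith C v (stdSimplex ℝ K)) :
    ∀ x ∈ stdSimplex ℝ K, ∀ y ∈ stdSimplex ℝ K, |v x - v y| ≤ (C : ℝ) * d1 x y := by
  intro x hx y hy
  have hd : dist x y ≤ d1 x y := by
    refine (dist_pi_le_iff (d1_nonneg x y)).mpr fun k => ?_
    rw [Real.dist_eq]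
    exact Finset.single_le_sum (f := fun k => |x k - y k|) (fun k _ => abs_nonneg _)
      (Finset.mem_univ k)
  calc |v x - v y| = dist (v x) (v y) := (Real.dist_eq _ _).symm
    _ ≤ C * dist x y := h.dist_le_mul x hx y hy
    _ ≤ C * d1 x y := mul_le_mul_of_nonneg_left hd C.coe_nonneg

lemma exists_abs_bound {C : NNReal} {v : (K → ℝ) → ℝ}
    (h : LipschitzOnWith C v (stdSimplex ℝ K)) :
    ∃ M : ℝ, ∀ q ∈ stdSimplex ℝ K, |v q| ≤ M := by
  obtain ⟨M, hM⟩ := (isCompact_stdSimplex ℝ K).exists_bound_of_continuousOn h.continuousOn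
  exact ⟨M, fun q hq => by simpa [Real.norm_eq_abs] using hM q hq⟩

lemma abs_cav_le {v : (K → ℝ) → ℝ} {M : ℝ} (hM : ∀ q ∈ stdSimplex ℝ K, |v q| ≤ M)
    {p : K → ℝ} (hp : p ∈ stdSimplex ℝ K) : |cav v p| ≤ M := by
  have hM' : ∀ q ∈ stdSimplex ℝ K, v q ≤ M := fun q hq => (abs_le.mp (hM q hq)).2
  rw [abs_le]
  exact ⟨le_trans (neg_le_of_abs_le (hM p hp)) (le_cav hM' hp), cav_le_const hM' hp⟩

lemma norm_le_one_of_mem {q : K → ℝ} (hq : q ∈ stdSimplex ℝ K) : ‖q‖ ≤ 1 := by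
  refine (pi_norm_le_iff_of_nonneg zero_le_one).mpr fun k => ?_
  rw [Real.norm_eq_abs, abs_of_nonneg (hq.1 k)]
  rw [← hq.2]
  exact Finset.single_le_sum (fun j _ => hq.1 j) (Finset.mem_univ k)

end Lip

section Marg

variable {KA KB : Type*} [Fintype KA] [Fintype KB]

lemma d1_margA_le (x y : KA × KB → ℝ) : d1 (margA x) (margA y) ≤ d1 x y := by
  unfold d1 margA
  calc ∑ a, |∑ b, x (a, b) - ∑ b, y (a, b)|
      = ∑ a, |∑ b, (x (a, b) - y (a, b))| := by
        refine Finset.sum_congr rfl fun a _ => ?_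
        rw [Finset.sum_sub_distrib]
    _ ≤ ∑ a, ∑ b, |x (a, b) - y (a, b)| :=
        Finset.sum_le_sum fun a _ => Finset.abs_sum_le_sum_abs _ _
    _ = ∑ kk : KA × KB, |x kk - y kk| := by rw [Fintype.sum_prod_type]

lemma d1_margB_le (x y : KA × KB → ℝ) : d1 (margB x) (margB y) ≤ d1 x y := by
  unfold d1 margB
  calc ∑ b, |∑ a, x (a, b) - ∑ a, y (a, b)|
      = ∑ b, |∑ a, (x (a, b) - y (a, b))| := by
        refine Finset.sum_congr rfl fun b _ => ?_
        rw [Finset.sum_sub_distrib]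
    _ ≤ ∑ b, ∑ a, |x (a, b) - y (a, b)| :=
        Finset.sum_le_sum fun b _ => Finset.abs_sum_le_sum_abs _ _
    _ = ∑ kk : KA × KB, |x kk - y kk| := by rw [Fintype.sum_prod_type_right]

lemma margA_comb (a b : ℝ) (x y : KA × KB → ℝ) :
    margA (a • x + b • y) = a • margA x + b • margA y := by
  funext c
  simp [margA, Pi.add_apply, Pi.smul_apply, smul_eq_mul, Finset.sum_add_distrib,
    Finset.mul_sum, mul_add]

lemma margB_comb (a b : ℝ) (x y : KA × KB → ℝ) :
    margB (a • x + b • y) = a • margB x + b • margB y := by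
  funext c
  simp [margB, Pi.add_apply, Pi.smul_apply, smul_eq_mul, Finset.sum_add_distrib,
    Finset.mul_sum, mul_add]

lemma margA_continuous : Continuous (margA : (KA × KB → ℝ) → (KA → ℝ)) :=
  continuous_pi fun a => continuous_finset_sum _ fun b _ => continuous_apply (a, b)

lemma margB_continuous : Continuous (margB : (KA × KB → ℝ) → (KB → ℝ)) :=
  continuous_pi fun b => continuous_finset_sum _ fun a _ => continuous_apply (a, b)

end Marg

end Stmt7Aux

open Stmt7Aux

/-- under the hypotheses of Statement 6, if moreover `p_t → p^∞` a.s. and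
the asymptotic posterior `p^∞` is a.s. a product distribution, then
`Cav(h)(p⁰) = Cav(v_A)(p⁰_A) + Cav(v_B)(p⁰_B)`, where `h(q) = v_A(q_A) + v_B(q_B)`. -/
theorem stmt_7 {KA KB : Type*} [Fintype KA] [Fintype KB]
    {Ω : Type*} {mΩ : MeasurableSpace Ω} {μ : Measure Ω} [IsProbabilityMeasure μ]
    (ℱ : Filtration ℕ mΩ)
    (vA : (KA → ℝ) → ℝ) (vB : (KB → ℝ) → ℝ) (CA CB : NNReal)
    (hvA : LipschitzOnWith CA vA (stdSimplex ℝ KA))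
    (hvB : LipschitzOnWith CB vB (stdSimplex ℝ KB))
    (p : ℕ → Ω → (KA × KB → ℝ)) (hmart : Martingale p ℱ μ)
    (hval : ∀ t, ∀ᵐ ω ∂μ, p t ω ∈ stdSimplex ℝ (KA × KB))
    (p0 : KA × KB → ℝ) (hp0 : p0 ∈ stdSimplex ℝ (KA × KB))
    (hinit : ∀ᵐ ω ∂μ, p 1 ω = p0)
    (βA βB : ℕ → Ω → ℝ)
    (hβA : Martingale βA ℱ μ) (hβB : Martingale βB ℱ μ)
    (hAle : ∀ t, ∀ᵐ ω ∂μ, βA t ω ≤ cav vA (margA (p t ω)))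
    (hBle : ∀ t, ∀ᵐ ω ∂μ, βB t ω ≤ cav vB (margB (p t ω)))
    (hsum : ∀ᵐ ω ∂μ, βA 1 ω + βB 1 ω = cav vA (margA p0) + cav vB (margB p0))
    (pinf : Ω → (KA × KB → ℝ))
    (hconv : ∀ᵐ ω ∂μ, Filter.Tendsto (fun t => p t ω) Filter.atTop (nhds (pinf ω)))
    (hprod : ∀ᵐ ω ∂μ, pinf ω = fun kk => margA (pinf ω) kk.1 * margB (pinf ω) kk.2) :
    cav (fun q : KA × KB → ℝ => vA (margA q) + vB (margB q)) p0
      = cav vA (margA p0) + cav vB (margB p0) := by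
  classical
  set hfun : (KA × KB → ℝ) → ℝ := fun q => vA (margA q) + vB (margB q) with hhfun
  -- bounds
  obtain ⟨MA, hMA⟩ := exists_abs_bound hvA
  obtain ⟨MB, hMB⟩ := exists_abs_bound hvB
  have hMA' : ∀ q ∈ stdSimplex ℝ KA, vA q ≤ MA := fun q hq => (abs_le.mp (hMA q hq)).2
  have hMB' : ∀ q ∈ stdSimplex ℝ KB, vB q ≤ MB := fun q hq => (abs_le.mp (hMB q hq)).2
  have hMh : ∀ q ∈ stdSimplex ℝ (KA × KB), |hfun q| ≤ MA + MB := by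
    intro q hq
    calc |hfun q| ≤ |vA (margA q)| + |vB (margB q)| := abs_add_le _ _
      _ ≤ MA + MB := add_le_add (hMA _ (margA_mem hq)) (hMB _ (margB_mem hq))
  have hMh' : ∀ q ∈ stdSimplex ℝ (KA × KB), hfun q ≤ MA + MB :=
    fun q hq => (abs_le.mp (hMh q hq)).2
  -- `d1`-Lipschitz bounds
  have hlipA := lip_to_d1 hvA
  have hlipB := lip_to_d1 hvB
  have hliph : ∀ x ∈ stdSimplex ℝ (KA × KB), ∀ y ∈ stdSimplex ℝ (KA × KB),
      |hfun x - hfun y| ≤ ((CA : ℝ) + (CB : ℝ)) * d1 x y := by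
    intro x hx y hy
    have h1 : |vA (margA x) - vA (margA y)| ≤ (CA : ℝ) * d1 x y :=
      (hlipA _ (margA_mem hx) _ (margA_mem hy)).trans
        (mul_le_mul_of_nonneg_left (d1_margA_le x y) CA.coe_nonneg)
    have h2 : |vB (margB x) - vB (margB y)| ≤ (CB : ℝ) * d1 x y :=
      (hlipB _ (margB_mem hx) _ (margB_mem hy)).trans
        (mul_le_mul_of_nonneg_left (d1_margB_le x y) CB.coe_nonneg)
    calc |hfun x - hfun y|
        = |(vA (margA x) - vA (margA y)) + (vB (margB x) - vB (margB y))| := by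
          rw [hhfun]; ring_nf
      _ ≤ |vA (margA x) - vA (margA y)| + |vB (margB x) - vB (margB y)| := abs_add_le _ _
      _ ≤ ((CA : ℝ) + (CB : ℝ)) * d1 x y := by rw [add_mul]; exact add_le_add h1 h2
  -- continuous extensions of the concavifications
  obtain ⟨FA, hFAc, hFAeq⟩ := exists_cav_ext CA.coe_nonneg hlipA hMA'
  obtain ⟨FB, hFBc, hFBeq⟩ := exists_cav_ext CB.coe_nonneg hlipB hMB'
  obtain ⟨Fh, hFhc, hFheq⟩ :=
    exists_cav_ext (by positivity : (0:ℝ) ≤ (CA : ℝ) + (CB : ℝ)) hliph hMh'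
  -- a.e. membership facts
  have hvalall : ∀ᵐ ω ∂μ, ∀ t, p t ω ∈ stdSimplex ℝ (KA × KB) := ae_all_iff.mpr hval
  have hpinfS : ∀ᵐ ω ∂μ, pinf ω ∈ stdSimplex ℝ (KA × KB) := by
    filter_upwards [hvalall, hconv] with ω h1 h2
    exact (isCompact_stdSimplex _ _).isClosed.mem_of_tendsto h2
      (Filter.Eventually.of_forall h1)
  -- measurability and integrability
  have hmeasp : ∀ t, AEStronglyMeasurable (p t) μ := fun t =>
    ((hmart.stronglyAdapted t).mono (ℱ.le t)).aestronglyMeasurable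
  have hmeaspinf : AEStronglyMeasurable pinf μ :=
    aestronglyMeasurable_of_tendsto_ae Filter.atTop hmeasp hconv
  have hintpinf : Integrable pinf μ := by
    refine Integrable.mono' (integrable_const (1:ℝ)) hmeaspinf ?_
    filter_upwards [hpinfS] with ω h using norm_le_one_of_mem h
  -- expectations of the martingale
  have hEp : ∀ t, 1 ≤ t → ∫ ω, p t ω ∂μ = p0 := by
    intro t ht
    have h1 : μ[p t | ℱ 1] =ᵐ[μ] p 1 := hmart.2 1 t ht
    calc ∫ ω, p t ω ∂μ = ∫ ω, (μ[p t | ℱ 1]) ω ∂μ := (integral_condExp (ℱ.le 1)).symm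
      _ = ∫ ω, p 1 ω ∂μ := integral_congr_ae h1
      _ = ∫ (_ : Ω), p0 ∂μ := integral_congr_ae hinit
      _ = p0 := by simp
  have hEpinf : ∫ ω, pinf ω ∂μ = p0 := by
    have hDCT : Filter.Tendsto (fun t => ∫ ω, p t ω ∂μ) Filter.atTop
        (nhds (∫ ω, pinf ω ∂μ)) := by
      refine tendsto_integral_of_dominated_convergence (fun _ => (1:ℝ)) hmeasp
        (integrable_const 1) (fun t => ?_) hconv
      filter_upwards [hval t] with ω h using norm_le_one_of_mem h
    have hconst : Filter.Tendsto (fun t : ℕ => ∫ ω, p t ω ∂μ) Filter.atTop (nhds p0) := by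
      refine Filter.Tendsto.congr' ?_ tendsto_const_nhds
      filter_upwards [Filter.eventually_ge_atTop 1] with t ht
      exact (hEp t ht).symm
    exact tendsto_nhds_unique hDCT hconst
  -- constant expectations of β
  have hEβ : ∀ (β : ℕ → Ω → ℝ), Martingale β ℱ μ → ∀ t : ℕ,
      ∫ ω, β t ω ∂μ = ∫ ω, β 1 ω ∂μ := by
    intro β hβ t
    have e : ∀ s : ℕ, ∫ ω, β s ω ∂μ = ∫ ω, β 0 ω ∂μ := by
      intro s
      calc ∫ ω, β s ω ∂μ = ∫ ω, (μ[β s | ℱ 0]) ω ∂μ := (integral_condExp (ℱ.le 0)).symm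
        _ = ∫ ω, β 0 ω ∂μ := integral_congr_ae (hβ.2 0 s (Nat.zero_le s))
    rw [e t, e 1]
  set cval : ℝ := cav vA (margA p0) + cav vB (margB p0) with hcval
  have hc1 : ∫ ω, (βA 1 ω + βB 1 ω) ∂μ = cval := by
    rw [integral_congr_ae hsum]; simp
  -- the continuous function Φ = FA ∘ margA + FB ∘ margB
  set Φ : (KA × KB → ℝ) → ℝ := fun q => FA (margA q) + FB (margB q) with hΦ
  have hΦcont : Continuous Φ :=
    ((hFAc.comp margA_continuous).add (hFBc.comp margB_continuous))
  have hΦval : ∀ q ∈ stdSimplex ℝ (KA × KB),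
      Φ q = cav vA (margA q) + cav vB (margB q) := fun q hq => by
    rw [hΦ]
    dsimp only
    rw [hFAeq _ (margA_mem hq), hFBeq _ (margB_mem hq)]
  have hΦbd : ∀ q ∈ stdSimplex ℝ (KA × KB), |Φ q| ≤ MA + MB := by
    intro q hq
    rw [hΦval q hq]
    calc |cav vA (margA q) + cav vB (margB q)|
        ≤ |cav vA (margA q)| + |cav vB (margB q)| := abs_add_le _ _
      _ ≤ MA + MB := add_le_add (abs_cav_le hMA (margA_mem hq)) (abs_cav_le hMB (margB_mem hq))
  have hmeasΦ : ∀ t, AEStronglyMeasurable (fun ω => Φ (p t ω)) μ := fun t =>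
    hΦcont.comp_aestronglyMeasurable (hmeasp t)
  have hintΦ : ∀ t, Integrable (fun ω => Φ (p t ω)) μ := by
    intro t
    refine Integrable.mono' (integrable_const (MA + MB)) (hmeasΦ t) ?_
    filter_upwards [hval t] with ω h
    rw [Real.norm_eq_abs]; exact hΦbd _ h
  -- step inequality for each t
  have hstep : ∀ t, cval ≤ ∫ ω, Φ (p t ω) ∂μ := by
    intro t
    have hβle : ∀ᵐ ω ∂μ, βA t ω + βB t ω ≤ Φ (p t ω) := by
      filter_upwards [hAle t, hBle t, hval t] with ω h1 h2 h3
      rw [hΦval _ h3]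
      exact add_le_add h1 h2
    have hmono : ∫ ω, (βA t ω + βB t ω) ∂μ ≤ ∫ ω, Φ (p t ω) ∂μ :=
      integral_mono_ae ((hβA.integrable t).add (hβB.integrable t)) (hintΦ t) hβle
    calc cval = ∫ ω, (βA 1 ω + βB 1 ω) ∂μ := hc1.symm
      _ = ∫ ω, βA 1 ω ∂μ + ∫ ω, βB 1 ω ∂μ :=
          integral_add (hβA.integrable 1) (hβB.integrable 1)
      _ = ∫ ω, βA t ω ∂μ + ∫ ω, βB t ω ∂μ := by
          rw [hEβ βA hβA t, hEβ βB hβB t]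
      _ = ∫ ω, (βA t ω + βB t ω) ∂μ :=
          (integral_add (hβA.integrable t) (hβB.integrable t)).symm
      _ ≤ ∫ ω, Φ (p t ω) ∂μ := hmono
  -- pass to the limit
  have hlim : Filter.Tendsto (fun t => ∫ ω, Φ (p t ω) ∂μ) Filter.atTop
      (nhds (∫ ω, Φ (pinf ω) ∂μ)) := by
    refine tendsto_integral_of_dominated_convergence (fun _ => MA + MB) hmeasΦ
      (integrable_const _) (fun t => ?_) ?_
    · filter_upwards [hval t] with ω h
      rw [Real.norm_eq_abs]; exact hΦbd _ h
    · filter_upwards [hconv] with ω h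
      exact (hΦcont.tendsto _).comp h
  have hc_le : cval ≤ ∫ ω, Φ (pinf ω) ∂μ := ge_of_tendsto' hlim hstep
  -- compare Φ with Fh at the (product) limit
  have hcavh_concave : ConcaveOn ℝ (stdSimplex ℝ (KA × KB)) (cav hfun) := cav_concave hMh'
  have hcavh_maj : ∀ q ∈ stdSimplex ℝ (KA × KB), hfun q ≤ cav hfun q :=
    fun q hq => le_cav hMh' hq
  have hFh_concave : ConcaveOn ℝ (stdSimplex ℝ (KA × KB)) Fh :=
    concaveOn_congr hcavh_concave (fun q hq => (hFheq q hq).symm)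
  have hprodineq : ∀ᵐ ω ∂μ, Φ (pinf ω) ≤ Fh (pinf ω) := by
    filter_upwards [hpinfS, hprod] with ω h1 h2
    have hA' : margA (pinf ω) ∈ stdSimplex ℝ KA := margA_mem h1
    have hB' : margB (pinf ω) ∈ stdSimplex ℝ KB := margB_mem h1
    have hkey := prod_ineq hcavh_concave hcavh_maj hA' hB'
    have hpp : prodDist (margA (pinf ω)) (margB (pinf ω)) = pinf ω := h2.symm
    rw [hpp] at hkey
    rw [← hFheq _ h1] at hkey
    rw [hΦval _ h1]
    exact hkey
  have hintΦinf : Integrable (fun ω => Φ (pinf ω)) μ := by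
    refine Integrable.mono' (integrable_const (MA + MB))
      (hΦcont.comp_aestronglyMeasurable hmeaspinf) ?_
    filter_upwards [hpinfS] with ω h
    rw [Real.norm_eq_abs]; exact hΦbd _ h
  have hintFh : Integrable (fun ω => Fh (pinf ω)) μ := by
    refine Integrable.mono' (integrable_const (MA + MB))
      (hFhc.comp_aestronglyMeasurable hmeaspinf) ?_
    filter_upwards [hpinfS] with ω h
    rw [Real.norm_eq_abs, hFheq _ h]
    exact abs_cav_le hMh h
  have h5 : ∫ ω, Φ (pinf ω) ∂μ ≤ ∫ ω, Fh (pinf ω) ∂μ :=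
    integral_mono_ae hintΦinf hintFh hprodineq
  -- Jensen
  have hJ : ∫ ω, Fh (pinf ω) ∂μ ≤ Fh (∫ ω, pinf ω ∂μ) :=
    hFh_concave.le_map_integral hFhc.continuousOn (isCompact_stdSimplex _ _).isClosed
      hpinfS hintpinf hintFh
  rw [hEpinf, hFheq _ hp0] at hJ
  -- easy direction
  have heasy : cav hfun p0 ≤ cval := by
    have hGcon : ConcaveOn ℝ (stdSimplex ℝ (KA × KB))
        (fun q => cav vA (margA q) + cav vB (margB q)) := by
      refine ⟨convex_stdSimplex ℝ _, fun x hx y hy a b ha hb hab => ?_⟩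
      dsimp only
      rw [margA_comb, margB_comb]
      have hA' := (cav_concave hMA').2 (margA_mem hx) (margA_mem hy) ha hb hab
      have hB' := (cav_concave hMB').2 (margB_mem hx) (margB_mem hy) ha hb hab
      simp only [smul_eq_mul] at hA' hB' ⊢
      linarith
    have hGmaj : ∀ q ∈ stdSimplex ℝ (KA × KB),
        hfun q ≤ cav vA (margA q) + cav vB (margB q) := fun q hq =>
      add_le_add (le_cav hMA' (margA_mem hq)) (le_cav hMB' (margB_mem hq))
    exact cav_le hGcon hGmaj hp0
  exact le_antisymm heasy (hc_le.trans (h5.trans hJ))
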